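/- Let a_1, …, a_n be positive integers with Σ_{i=1}^n a_i = 2B for a positive integer B, and set H = B. Consider the S2L-STAR graph: a center vertex v_0; for each i ∈ {1,…,n} an inner vertex u_i adjacent to v_0 by an edge of weight a_i and an outer vertex w_i adjacent to u_i by an edge of weight a_i (these are the only edges). Then there exists a walk starting at v_0 that visits every inner vertex u_i within time 6H − 3a_i and every outer vertex w_i within time 10H − 2a_i if and only if there exists a subset I' ⊆ {1,…,n} with Σ_{i∈I'} a_i = B. (This is the correctness of the reduction from PARTITION showing NP-hardness of k-SRG-v on special 2-level star graphs, i.e., on trees.) -/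

import Mathlib

/-- The vertices of an S2L-STAR graph: a center `v₀`, an inner vertex `uᵢ` and an
outer vertex `wᵢ` for each branch `i`. -/
inductive S2LVertex (n : ℕ) where
  | center : S2LVertex n
  | inner : Fin n → S2LVertex n
  | outer : Fin n → S2LVertex n

/-- `S2LStep n a u v c` holds iff `{u, v}` is an edge of the S2L-STAR graph with branch
weights `a`, of weight `c`: the center is adjacent to each inner vertex `uᵢ` with weight
`a i`, and `uᵢ` is adjacent to the outer vertex `wᵢ` with weight `a i`. -/
inductive S2LStep (n : ℕ) (a : Fin n → ℕ) : S2LVertex n → S2LVertex n → ℕ → Prop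
  | ci (i : Fin n) : S2LStep n a .center (.inner i) (a i)
  | ic (i : Fin n) : S2LStep n a (.inner i) .center (a i)
  | io (i : Fin n) : S2LStep n a (.inner i) (.outer i) (a i)
  | oi (i : Fin n) : S2LStep n a (.outer i) (.inner i) (a i)

deriving instance DecidableEq for S2LVertex

namespace S2Laux

/-- number of switches of a boolean function in `[0,k)` -/
def sw (f : ℕ → Bool) (k : ℕ) : ℕ :=
  ((Finset.range k).filter (fun l => f l ≠ f (l+1))).card

lemma sw_succ (f : ℕ → Bool) (k : ℕ) :
    sw f (k+1) = sw f k + (if f k = f (k+1) then 0 else 1) := by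
  unfold sw
  rw [Finset.range_add_one, Finset.filter_insert]
  by_cases h : f k = f (k+1) <;>
    simp [h, Finset.card_insert_of_notMem, Finset.mem_filter]

lemma sw_mono (f : ℕ → Bool) {k k' : ℕ} (h : k ≤ k') : sw f k ≤ sw f k' := by
  apply Finset.card_le_card
  apply Finset.filter_subset_filter
  exact Finset.range_subset_range.mpr h

lemma sw_lt (f : ℕ → Bool) {k k' : ℕ} (h : k ≤ k') (hne : f k ≠ f k') :
    sw f k < sw f k' := by
  induction k' with
  | zero =>
    interval_cases k
    exact absurd rfl hne
  | succ k' ih =>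
    rcases Nat.lt_or_ge k (k'+1) with hlt | hge
    · have hk : k ≤ k' := by omega
      by_cases hf : f k = f k'
      · have hne' : f k' ≠ f (k'+1) := by rw [← hf]; exact hne
        rw [sw_succ, if_neg hne']
        have := sw_mono f hk
        omega
      · have := ih hk hf
        rw [sw_succ]
        omega
    · have : k = k' + 1 := by omega
      subst this
      exact absurd rfl hne

end S2Laux

namespace S2Laux

def inB {n : ℕ} (j : Fin n) : S2LVertex n → Bool
  | .inner i => i = j
  | .outer i => i = j
  | .center => false

def outB {n : ℕ} (j : Fin n) : S2LVertex n → Bool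
  | .outer i => i = j
  | _ => false

lemma step_cases {n : ℕ} {a : Fin n → ℕ} {u v : S2LVertex n} {d : ℕ}
    (h : S2LStep n a u v d) :
    ∃ i : Fin n, d = a i ∧
      ((u = .center ∧ v = .inner i) ∨ (u = .inner i ∧ v = .center) ∨
       (u = .inner i ∧ v = .outer i) ∨ (u = .outer i ∧ v = .inner i)) := by
  cases h <;> exact ⟨_, rfl, by simp⟩

lemma total {n : ℕ} (a : Fin n → ℕ) (x : ℕ → S2LVertex n) (c : ℕ → ℕ) (m : ℕ)
    (hstep : ∀ j < m, S2LStep n a (x j) (x (j+1)) (c j)) :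
    ∀ k ≤ m, ∑ l ∈ Finset.range k, c l =
      ∑ j : Fin n, a j * (sw (fun l => inB j (x l)) k + sw (fun l => outB j (x l)) k) := by
  intro k
  induction k with
  | zero => intro _; simp [sw]
  | succ k ih =>
    intro hk
    have ihk := ih (by omega)
    rw [Finset.sum_range_succ, ihk]
    have hst := hstep k (by omega)
    obtain ⟨i, hd, hcase⟩ := step_cases hst
    have main : ∑ j : Fin n,
        a j * (sw (fun l => inB j (x l)) (k+1) + sw (fun l => outB j (x l)) (k+1)) =
        ∑ j : Fin n, (a j * (sw (fun l => inB j (x l)) k + sw (fun l => outB j (x l)) k)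
          + if j = i then a j else 0) := by
      apply Finset.sum_congr rfl
      intro j _
      rw [sw_succ, sw_succ]
      rcases hcase with ⟨hu, hv⟩ | ⟨hu, hv⟩ | ⟨hu, hv⟩ | ⟨hu, hv⟩ <;>
        rw [hu, hv] <;> by_cases hji : j = i <;>
          simp [inB, outB, hji, Ne.symm, eq_comm] <;> ring
    rw [main, Finset.sum_add_distrib, Finset.sum_ite_eq' Finset.univ i a]
    simp [hd]
end S2Laux

namespace S2Laux

lemma sw_zero (f : ℕ → Bool) : sw f 0 = 0 := by simp [sw]

lemma sw_ge_one {f : ℕ → Bool} {l k : ℕ} (h0 : f 0 = false) (hl : l ≤ k)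
    (h1 : f l = true) : 1 ≤ sw f k := by
  have a1 := sw_lt f (Nat.zero_le l) (by simp [h0, h1])
  have a2 := sw_mono f hl
  have := sw_zero f
  omega

lemma sw_ge_two {f : ℕ → Bool} {l k : ℕ} (h0 : f 0 = false) (hl : l ≤ k)
    (h1 : f l = true) (h2 : f k = false) : 2 ≤ sw f k := by
  have a1 := sw_lt f (Nat.zero_le l) (by simp [h0, h1])
  have a2 := sw_lt f hl (by simp [h1, h2])
  have := sw_zero f
  omega

lemma sw_ge_three {f : ℕ → Bool} {l1 l2 k : ℕ} (h0 : f 0 = false) (h12 : l1 ≤ l2)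
    (h2k : l2 ≤ k) (h1 : f l1 = true) (h2 : f l2 = false) (hk : f k = true) :
    3 ≤ sw f k := by
  have a1 := sw_lt f (Nat.zero_le l1) (by simp [h0, h1])
  have a2 := sw_lt f h12 (by simp [h1, h2])
  have a3 := sw_lt f h2k (by simp [h2, hk])
  have := sw_zero f
  omega

lemma sw_ge_four {f : ℕ → Bool} {l1 l2 l3 k : ℕ} (h0 : f 0 = false) (h12 : l1 ≤ l2)
    (h23 : l2 ≤ l3) (h3k : l3 ≤ k) (h1 : f l1 = true) (h2 : f l2 = false)
    (h3 : f l3 = true) (hk : f k = false) : 4 ≤ sw f k := by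
  have a1 := sw_lt f (Nat.zero_le l1) (by simp [h0, h1])
  have a2 := sw_lt f h12 (by simp [h1, h2])
  have a3 := sw_lt f h23 (by simp [h2, h3])
  have a4 := sw_lt f h3k (by simp [h3, hk])
  have := sw_zero f
  omega

lemma forward {n B : ℕ} (hB : 0 < B) (a : Fin n → ℕ) (ha : ∀ i, 0 < a i)
    (hsum : ∑ i, a i = 2 * B)
    (m : ℕ) (x : ℕ → S2LVertex n) (c : ℕ → ℕ)
    (hx0 : x 0 = S2LVertex.center)
    (hstep : ∀ j < m, S2LStep n a (x j) (x (j + 1)) (c j))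
    (hinner : ∀ i : Fin n, ∃ j ≤ m, x j = S2LVertex.inner i ∧
          (∑ l ∈ Finset.range j, c l) + 3 * a i ≤ 6 * B)
    (houter : ∀ i : Fin n, ∃ j ≤ m, x j = S2LVertex.outer i ∧
          (∑ l ∈ Finset.range j, c l) + 2 * a i ≤ 10 * B) :
    ∃ I : Finset (Fin n), ∑ i ∈ I, a i = B := by
  classical
  have hn : 0 < n := by
    rcases Nat.eq_zero_or_pos n with h0 | h
    · exfalso; subst h0; simp at hsum; omega
    · exact h
  choose ti htile htix htit using hinner
  choose si hsile hsix hsit using houter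
  obtain ⟨i₀, -, hmax⟩ := Finset.exists_max_image Finset.univ ti ⟨⟨0, hn⟩, Finset.mem_univ _⟩
  set k₀ := ti i₀ with hk₀def
  set I : Finset (Fin n) :=
    Finset.univ.filter (fun j => ∃ l ≤ k₀, x l = S2LVertex.outer j) with hIdef
  have hImem : ∀ j, j ∈ I ↔ ∃ l ≤ k₀, x l = S2LVertex.outer j := by
    intro j; simp [hIdef]
  -- abbreviations
  have hNM := total a x c m hstep
  -- Inequality 1 at k₀
  have hpt1 : ∀ j ∈ Finset.univ (α := Fin n),
      a j * (if j ∈ I then 4 else 2) ≤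
        a j * (sw (fun l => inB j (x l)) k₀ + sw (fun l => outB j (x l)) k₀)
          + (if j = i₀ then a j else 0) := by
    intro j _
    have hf0 : inB j (x 0) = false := by rw [hx0]; rfl
    have hg0 : outB j (x 0) = false := by rw [hx0]; rfl
    by_cases hji : j = i₀
    · subst hji
      have hN1 : 1 ≤ sw (fun l => inB j (x l)) k₀ :=
        sw_ge_one hf0 (le_refl k₀) (by simp [hk₀def, htix j, inB])
      by_cases hjI : j ∈ I
      · obtain ⟨l, hl, hxl⟩ := (hImem j).mp hjI
        have hM2 : 2 ≤ sw (fun l => outB j (x l)) k₀ :=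
          sw_ge_two hg0 hl (by simp [hxl, outB]) (by simp [hk₀def, htix j, outB])
        simp only [hjI, if_pos, if_true]
        calc a j * 4 ≤ a j * (sw (fun l => inB j (x l)) k₀
              + sw (fun l => outB j (x l)) k₀ + 1) := by
              apply Nat.mul_le_mul_left; omega
          _ = _ + a j := by ring
      · simp only [hjI, if_false, if_true]
        calc a j * 2 ≤ a j * (sw (fun l => inB j (x l)) k₀
              + sw (fun l => outB j (x l)) k₀ + 1) := by
              apply Nat.mul_le_mul_left; omega
          _ = _ + a j := by ring
    · have hji' : i₀ ≠ j := fun h => hji h.symm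
      have hN2 : 2 ≤ sw (fun l => inB j (x l)) k₀ :=
        sw_ge_two hf0 (hmax j (Finset.mem_univ j)) (by simp [htix j, inB])
          (by simp [hk₀def, htix i₀, inB, hji'])
      by_cases hjI : j ∈ I
      · obtain ⟨l, hl, hxl⟩ := (hImem j).mp hjI
        have hM2 : 2 ≤ sw (fun l => outB j (x l)) k₀ :=
          sw_ge_two hg0 hl (by simp [hxl, outB]) (by simp [hk₀def, htix i₀, outB])
        simp only [hjI, if_pos, hji, if_false]
        calc a j * 4 ≤ a j * (sw (fun l => inB j (x l)) k₀
              + sw (fun l => outB j (x l)) k₀) := by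
              apply Nat.mul_le_mul_left; omega
          _ = _ + 0 := by ring
      · simp only [hjI, hji, if_false]
        calc a j * 2 ≤ a j * (sw (fun l => inB j (x l)) k₀
              + sw (fun l => outB j (x l)) k₀) := by
              apply Nat.mul_le_mul_left; omega
          _ = _ + 0 := by ring
  have hsum1 : ∑ j ∈ Finset.univ, a j * (if j ∈ I then 4 else 2) ≤
      (∑ l ∈ Finset.range k₀, c l) + a i₀ := by
    have := Finset.sum_le_sum hpt1
    rw [Finset.sum_add_distrib, Finset.sum_ite_eq' Finset.univ i₀ a] at this
    simp only [Finset.mem_univ, if_true] at this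
    rw [hNM k₀ (htile i₀)]
    exact this
  -- I^c is nonempty
  have hcompl : (∑ j ∈ I, a j) + (∑ j ∈ Iᶜ, a j) = 2 * B := by
    rw [Finset.sum_add_sum_compl]; exact hsum
  have hL1 : ∑ j ∈ Finset.univ, a j * (if j ∈ I then 4 else 2)
      = 4 * (∑ j ∈ I, a j) + 2 * (∑ j ∈ Iᶜ, a j) := by
    rw [← Finset.sum_add_sum_compl I (fun j => a j * (if j ∈ I then 4 else 2))]
    congr 1
    · rw [Finset.mul_sum]
      apply Finset.sum_congr rfl
      intro j hj; rw [if_pos hj]; ring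
    · rw [Finset.mul_sum]
      apply Finset.sum_congr rfl
      intro j hj; rw [if_neg (Finset.mem_compl.mp hj)]; ring
  rw [hL1] at hsum1
  have hT0 : (∑ l ∈ Finset.range k₀, c l) + 3 * a i₀ ≤ 6 * B := htit i₀
  rcases Finset.eq_empty_or_nonempty Iᶜ with hc | hc
  · exfalso
    have : (∑ j ∈ Iᶜ, a j) = 0 := by rw [hc]; simp
    have := ha i₀
    omega
  obtain ⟨j₁, hj₁mem, hmax2⟩ := Finset.exists_max_image Iᶜ si hc
  have hj₁I : j₁ ∉ I := Finset.mem_compl.mp hj₁mem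
  set k₁ := si j₁ with hk₁def
  have hxk₁ : x k₁ = S2LVertex.outer j₁ := hsix j₁
  have hk01 : k₀ < k₁ := by
    by_contra hcon
    exact hj₁I ((hImem j₁).mpr ⟨k₁, by omega, hxk₁⟩)
  -- Inequality 2 at k₁
  have hpt2 : ∀ j ∈ Finset.univ (α := Fin n),
      a j * (if j ∈ I then 4 else 6) ≤
        a j * (sw (fun l => inB j (x l)) k₁ + sw (fun l => outB j (x l)) k₁)
          + ((if j = j₁ then 2 * a j else 0)
             + (if i₀ ∉ I ∧ j = i₀ then 2 * a j else 0)) := by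
    intro j _
    have hf0 : inB j (x 0) = false := by rw [hx0]; rfl
    have hg0 : outB j (x 0) = false := by rw [hx0]; rfl
    by_cases hjI : j ∈ I
    · have hjj₁ : j₁ ≠ j := fun h => hj₁I (h ▸ hjI)
      have hN2 : 2 ≤ sw (fun l => inB j (x l)) k₁ :=
        sw_ge_two hf0 (le_trans (hmax j (Finset.mem_univ j)) hk01.le)
          (by simp [htix j, inB]) (by simp [hxk₁, inB, hjj₁])
      obtain ⟨l, hl, hxl⟩ := (hImem j).mp hjI
      have hM2 : 2 ≤ sw (fun l => outB j (x l)) k₁ :=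
        sw_ge_two hg0 (le_trans hl hk01.le) (by simp [hxl, outB])
          (by simp [hxk₁, outB, hjj₁])
      have base : a j * 4 ≤ a j * (sw (fun l => inB j (x l)) k₁
          + sw (fun l => outB j (x l)) k₁) := Nat.mul_le_mul_left _ (by omega)
      simp only [hjI, if_pos]
      omega
    · by_cases hjj₁ : j = j₁
      · subst hjj₁
        by_cases hji : j = i₀
        · have hN1 : 1 ≤ sw (fun l => inB j (x l)) k₁ :=
            sw_ge_one hf0 (le_refl k₁) (by simp [hxk₁, inB])
          have hM1 : 1 ≤ sw (fun l => outB j (x l)) k₁ :=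
            sw_ge_one hg0 (le_refl k₁) (by simp [hxk₁, outB])
          have base : a j * 2 ≤ a j * (sw (fun l => inB j (x l)) k₁
              + sw (fun l => outB j (x l)) k₁) := Nat.mul_le_mul_left _ (by omega)
          have h1 : (if j ∈ I then (4:ℕ) else 6) = 6 := if_neg hjI
          have h2 : (if j = j then 2 * a j else 0) = 2 * a j := if_pos rfl
          have h3 : (if i₀ ∉ I ∧ j = i₀ then 2 * a j else 0) = 2 * a j := by
            rw [if_pos ⟨hji ▸ hjI, hji⟩]
          rw [h1, h2, h3]
          omega
        · have hji' : i₀ ≠ j := fun h => hji h.symm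
          have hN3 : 3 ≤ sw (fun l => inB j (x l)) k₁ :=
            sw_ge_three hf0 (hmax j (Finset.mem_univ j)) hk01.le
              (by simp [htix j, inB]) (by simp [hk₀def, htix i₀, inB, hji'])
              (by simp [hxk₁, inB])
          have hM1 : 1 ≤ sw (fun l => outB j (x l)) k₁ :=
            sw_ge_one hg0 (le_refl k₁) (by simp [hxk₁, outB])
          have base : a j * 4 ≤ a j * (sw (fun l => inB j (x l)) k₁
              + sw (fun l => outB j (x l)) k₁) := Nat.mul_le_mul_left _ (by omega)
          have h1 : (if j ∈ I then (4:ℕ) else 6) = 6 := if_neg hjI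
          have h2 : (if j = j then 2 * a j else 0) = 2 * a j := if_pos rfl
          rw [h1, h2]
          omega
      · have hj₁j : j₁ ≠ j := fun h => hjj₁ h.symm
        by_cases hji : j = i₀
        · subst hji
          have hN2 : 2 ≤ sw (fun l => inB j (x l)) k₁ :=
            sw_ge_two hf0 hk01.le (by simp [hk₀def, htix j, inB]) (by simp [hxk₁, inB, hj₁j])
          have hsile2 : si j ≤ k₁ := hmax2 j (Finset.mem_compl.mpr hjI)
          have hM2 : 2 ≤ sw (fun l => outB j (x l)) k₁ :=
            sw_ge_two hg0 hsile2 (by simp [hsix j, outB]) (by simp [hxk₁, outB, hj₁j])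
          have base : a j * 4 ≤ a j * (sw (fun l => inB j (x l)) k₁
              + sw (fun l => outB j (x l)) k₁) := Nat.mul_le_mul_left _ (by omega)
          have h1 : (if j ∈ I then (4:ℕ) else 6) = 6 := if_neg hjI
          have h3 : (if j ∉ I ∧ j = j then 2 * a j else 0) = 2 * a j :=
            if_pos ⟨hjI, rfl⟩
          rw [h1, h3, if_neg hjj₁]
          omega
        · have hji' : i₀ ≠ j := fun h => hji h.symm
          have hk0sij : k₀ < si j := by
            by_contra hcon
            exact hjI ((hImem j).mpr ⟨si j, by omega, hsix j⟩)
          have hsile2 : si j ≤ k₁ := hmax2 j (Finset.mem_compl.mpr hjI)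
          have hN4 : 4 ≤ sw (fun l => inB j (x l)) k₁ :=
            sw_ge_four hf0 (hmax j (Finset.mem_univ j)) hk0sij.le hsile2
              (by simp [htix j, inB]) (by simp [hk₀def, htix i₀, inB, hji'])
              (by simp [hsix j, inB]) (by simp [hxk₁, inB, hj₁j])
          have hM2 : 2 ≤ sw (fun l => outB j (x l)) k₁ :=
            sw_ge_two hg0 hsile2 (by simp [hsix j, outB]) (by simp [hxk₁, outB, hj₁j])
          have base : a j * 6 ≤ a j * (sw (fun l => inB j (x l)) k₁
              + sw (fun l => outB j (x l)) k₁) := Nat.mul_le_mul_left _ (by omega)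
          rw [if_neg hjI, if_neg hjj₁]
          omega
  have hE : ∑ j ∈ Finset.univ, (if i₀ ∉ I ∧ j = i₀ then 2 * a j else 0)
      = if i₀ ∈ I then 0 else 2 * a i₀ := by
    by_cases hi : i₀ ∈ I
    · simp [hi]
    · simp only [hi, not_false_iff, true_and, if_false]
      rw [Finset.sum_ite_eq' Finset.univ i₀ (fun j => 2 * a j)]
      simp
  have hsum2 : 4 * (∑ j ∈ I, a j) + 6 * (∑ j ∈ Iᶜ, a j) ≤
      (∑ l ∈ Finset.range k₁, c l) + 2 * a j₁
        + (if i₀ ∈ I then 0 else 2 * a i₀) := by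
    have h := Finset.sum_le_sum hpt2
    rw [Finset.sum_add_distrib, Finset.sum_add_distrib,
      Finset.sum_ite_eq' Finset.univ j₁ (fun j => 2 * a j), hE] at h
    simp only [Finset.mem_univ, if_true] at h
    have hL2 : ∑ j ∈ Finset.univ, a j * (if j ∈ I then 4 else 6)
        = 4 * (∑ j ∈ I, a j) + 6 * (∑ j ∈ Iᶜ, a j) := by
      rw [← Finset.sum_add_sum_compl I (fun j => a j * (if j ∈ I then 4 else 6))]
      congr 1
      · rw [Finset.mul_sum]
        apply Finset.sum_congr rfl
        intro j hj; rw [if_pos hj]; ring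
      · rw [Finset.mul_sum]
        apply Finset.sum_congr rfl
        intro j hj; rw [if_neg (Finset.mem_compl.mp hj)]; ring
    rw [hL2, ← hNM k₁ (hsile j₁)] at h
    omega
  have hT1 : (∑ l ∈ Finset.range k₁, c l) + 2 * a j₁ ≤ 10 * B := hsit j₁
  have hai := ha i₀
  by_cases hi : i₀ ∈ I
  · exfalso
    rw [if_pos hi] at hsum2
    omega
  · refine ⟨insert i₀ I, ?_⟩
    rw [Finset.sum_insert hi]
    rw [if_neg hi] at hsum2
    omega

end S2Laux

namespace S2Laux

def good (n : ℕ) (a : Fin n → ℕ) : S2LVertex n → List (S2LVertex n × ℕ) → Prop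
  | _, [] => True
  | v, p :: t => S2LStep n a v p.1 p.2 ∧ good n a p.1 t

def lastV {n : ℕ} (v : S2LVertex n) (P : List (S2LVertex n × ℕ)) : S2LVertex n :=
  (P.map Prod.fst).getLastD v

lemma lastV_cons {n : ℕ} (v : S2LVertex n) (p : S2LVertex n × ℕ) (t) :
    lastV v (p :: t) = lastV p.1 t := by
  simp only [lastV, List.map_cons, List.getLastD_cons]

lemma good_append {n : ℕ} (a : Fin n → ℕ) (P Q : List (S2LVertex n × ℕ)) :
    ∀ v, good n a v P → good n a (lastV v P) Q → good n a v (P ++ Q) := by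
  induction P with
  | nil => intro v _ h; simpa [lastV] using h
  | cons p t ih =>
    intro v hP hQ
    rw [lastV_cons] at hQ
    exact ⟨hP.1, ih p.1 hP.2 hQ⟩

def vxg {n : ℕ} (v : S2LVertex n) (P : List (S2LVertex n × ℕ)) : ℕ → S2LVertex n
  | 0 => v
  | j+1 => (P.map Prod.fst).getD j S2LVertex.center

def cs {n : ℕ} (P : List (S2LVertex n × ℕ)) (j : ℕ) : ℕ :=
  (P.map Prod.snd).getD j 0

lemma vxg_cons {n : ℕ} (v : S2LVertex n) (p : S2LVertex n × ℕ) (t) (j : ℕ) :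
    vxg v (p :: t) (j + 1) = vxg p.1 t j := by
  cases j with
  | zero => simp [vxg]
  | succ j => simp [vxg]

lemma cs_cons {n : ℕ} (p : S2LVertex n × ℕ) (t) (j : ℕ) :
    cs (p :: t) (j + 1) = cs t j := by simp [cs]

lemma steps_of_good {n : ℕ} (a : Fin n → ℕ) :
    ∀ (P : List (S2LVertex n × ℕ)) (v : S2LVertex n), good n a v P →
      ∀ j < P.length, S2LStep n a (vxg v P j) (vxg v P (j+1)) (cs P j) := by
  intro P
  induction P with
  | nil => intro v _ j hj; simp at hj
  | cons p t ih =>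
    intro v hg j hj
    cases j with
    | zero =>
      simpa [vxg, cs] using hg.1
    | succ j =>
      rw [vxg_cons, vxg_cons, cs_cons]
      exact ih p.1 hg.2 j (by simpa using hj)

end S2Laux

namespace S2Laux

lemma lastV_append {n : ℕ} (P Q : List (S2LVertex n × ℕ)) :
    ∀ v, lastV v (P ++ Q) = lastV (lastV v P) Q := by
  induction P with
  | nil => intro v; rfl
  | cons p t ih =>
    intro v
    rw [List.cons_append, lastV_cons, lastV_cons, ih]

lemma good_flat {n : ℕ} (a : Fin n → ℕ) (sg : Fin n → List (S2LVertex n × ℕ))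
    (h : ∀ i, good n a .center (sg i) ∧ lastV .center (sg i) = .center) :
    ∀ L : List (Fin n), good n a .center (L.flatMap sg) ∧
      lastV .center (L.flatMap sg) = .center := by
  intro L
  induction L with
  | nil => exact ⟨trivial, rfl⟩
  | cons i t ih =>
    rw [List.flatMap_cons]
    constructor
    · exact good_append a _ _ _ (h i).1 (by rw [(h i).2]; exact ih.1)
    · rw [lastV_append, (h i).2, ih.2]

lemma tsum_eq {n : ℕ} (P : List (S2LVertex n × ℕ)) :
    ∀ j ≤ P.length, ∑ l ∈ Finset.range j, cs P l = ((P.map Prod.snd).take j).sum := by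
  intro j
  induction j with
  | zero => simp
  | succ j ih =>
    intro hj
    have hj' : j < (P.map Prod.snd).length := by simpa using hj
    rw [Finset.sum_range_succ, ih (by omega), List.sum_take_succ _ j hj']
    rw [cs, List.getD_eq_getElem _ 0 hj']

lemma visit_at {n : ℕ} (Q S : List (S2LVertex n × ℕ)) (r : ℕ) (hr : r < S.length) :
    vxg S2LVertex.center (Q ++ S) (Q.length + r + 1)
      = (S.map Prod.fst).getD r S2LVertex.center
    ∧ Q.length + r + 1 ≤ (Q ++ S).length
    ∧ ∑ l ∈ Finset.range (Q.length + r + 1), cs (Q ++ S) l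
        = (Q.map Prod.snd).sum + ((S.map Prod.snd).take (r+1)).sum := by
  have hlen : Q.length + r + 1 ≤ (Q ++ S).length := by
    simp only [List.length_append]; omega
  refine ⟨?_, hlen, ?_⟩
  · show (((Q ++ S).map Prod.fst).getD (Q.length + r) _) = _
    rw [List.map_append, List.getD_append_right _ _ _ _ (by simp)]
    congr 1
    simp
  · rw [tsum_eq _ _ hlen, List.map_append]
    have : Q.length + r + 1 = (Q.map Prod.snd).length + (r + 1) := by simp; omega
    rw [this, List.take_length_add_append, List.sum_append]

def seg1 {n : ℕ} (a : Fin n → ℕ) (i : Fin n) : List (S2LVertex n × ℕ) :=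
  [(.inner i, a i), (.center, a i)]

def seg2 {n : ℕ} (a : Fin n → ℕ) (i : Fin n) : List (S2LVertex n × ℕ) :=
  [(.inner i, a i), (.outer i, a i), (.inner i, a i), (.center, a i)]

lemma seg1_spec {n : ℕ} (a : Fin n → ℕ) (i : Fin n) :
    good n a .center (seg1 a i) ∧ lastV .center (seg1 a i) = .center :=
  ⟨⟨S2LStep.ci i, S2LStep.ic i, trivial⟩, rfl⟩

lemma seg2_spec {n : ℕ} (a : Fin n → ℕ) (i : Fin n) :
    good n a .center (seg2 a i) ∧ lastV .center (seg2 a i) = .center :=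
  ⟨⟨S2LStep.ci i, S2LStep.io i, S2LStep.oi i, S2LStep.ic i, trivial⟩, rfl⟩

lemma cost_flat {n : ℕ} (sg : Fin n → List (S2LVertex n × ℕ)) (w : Fin n → ℕ)
    (h : ∀ i, ((sg i).map Prod.snd).sum = w i) :
    ∀ L : List (Fin n), ((L.flatMap sg).map Prod.snd).sum = (L.map w).sum := by
  intro L
  induction L with
  | nil => rfl
  | cons i t ih =>
    rw [List.flatMap_cons, List.map_append, List.sum_append, ih, h i, List.map_cons,
      List.sum_cons]

end S2Laux

namespace S2Laux

lemma sum_map_mul {α : Type*} (b : ℕ) (f : α → ℕ) (L : List α) :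
    (L.map (fun i => b * f i)).sum = b * (L.map f).sum := by
  induction L with
  | nil => simp
  | cons i t ih => simp [ih, Nat.mul_add]

lemma backward {n B : ℕ} (hB : 0 < B) (a : Fin n → ℕ) (ha : ∀ i, 0 < a i)
    (hsum : ∑ i, a i = 2 * B) (I : Finset (Fin n)) (hI : ∑ i ∈ I, a i = B) :
    ∃ (m : ℕ) (x : ℕ → S2LVertex n) (c : ℕ → ℕ),
        x 0 = S2LVertex.center ∧
        (∀ j < m, S2LStep n a (x j) (x (j + 1)) (c j)) ∧
        (∀ i : Fin n, ∃ j ≤ m, x j = S2LVertex.inner i ∧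
          (∑ l ∈ Finset.range j, c l) + 3 * a i ≤ 6 * B) ∧
        (∀ i : Fin n, ∃ j ≤ m, x j = S2LVertex.outer i ∧
          (∑ l ∈ Finset.range j, c l) + 2 * a i ≤ 10 * B) := by
  classical
  have hC : ∑ i ∈ Iᶜ, a i = B := by
    have := Finset.sum_add_sum_compl I a
    omega
  set P1 := Iᶜ.toList.flatMap (seg1 a) with hP1
  set P2 := I.toList.flatMap (seg2 a) with hP2
  set P3 := Iᶜ.toList.flatMap (seg2 a) with hP3
  set W := P1 ++ (P2 ++ P3) with hW
  have hseg1cost : ∀ i, ((seg1 a i).map Prod.snd).sum = 2 * a i := by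
    intro i; simp [seg1]; omega
  have hseg2cost : ∀ i, ((seg2 a i).map Prod.snd).sum = 4 * a i := by
    intro i; simp [seg2]; omega
  have hP1cost : (P1.map Prod.snd).sum = 2 * B := by
    rw [hP1, cost_flat _ _ hseg1cost, sum_map_mul 2 a, Finset.sum_map_toList, hC]
  have hP2cost : (P2.map Prod.snd).sum = 4 * B := by
    rw [hP2, cost_flat _ _ hseg2cost, sum_map_mul 4 a, Finset.sum_map_toList, hI]
  -- goodness
  have g1 := good_flat a (seg1 a) (seg1_spec a) Iᶜ.toList
  have g2 := good_flat a (seg2 a) (seg2_spec a) I.toList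
  have g3 := good_flat a (seg2 a) (seg2_spec a) Iᶜ.toList
  have gW : good n a .center W := by
    apply good_append a _ _ _ g1.1
    rw [g1.2]
    apply good_append a _ _ _ g2.1
    rw [g2.2]
    exact g3.1
  refine ⟨W.length, vxg .center W, cs W, rfl, steps_of_good a W .center gW, ?_, ?_⟩
  · -- inner visits
    intro i
    by_cases hiI : i ∈ I
    · obtain ⟨L₁, L₂, hsplit⟩ := List.append_of_mem (Finset.mem_toList.mpr hiI)
      have hsumL : (L₁.map a).sum + a i + (L₂.map a).sum = B := by
        have : (I.toList.map a).sum = B := by rw [Finset.sum_map_toList, hI]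
        rw [hsplit] at this
        simp at this
        omega
      have hWQ : W = (P1 ++ L₁.flatMap (seg2 a)) ++
          ((seg2 a i ++ L₂.flatMap (seg2 a)) ++ P3) := by
        rw [hW, hP2, hsplit, List.flatMap_append, List.flatMap_cons]
        simp [List.append_assoc]
      obtain ⟨hv, hle, ht⟩ := visit_at (P1 ++ L₁.flatMap (seg2 a))
        ((seg2 a i ++ L₂.flatMap (seg2 a)) ++ P3) 0 (by simp [seg2])
      rw [← hWQ] at hv hle ht
      refine ⟨_, hle, ?_, ?_⟩
      · rw [hv]; simp [seg2]
      · rw [ht]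
        have hQc : ((P1 ++ L₁.flatMap (seg2 a)).map Prod.snd).sum
            = 2 * B + 4 * (L₁.map a).sum := by
          rw [List.map_append, List.sum_append, hP1cost,
            cost_flat _ _ hseg2cost, sum_map_mul 4 a]
        rw [hQc]
        have htk : ((((seg2 a i ++ L₂.flatMap (seg2 a)) ++ P3).map Prod.snd).take 1).sum
            = a i := by simp [seg2]
        rw [htk]
        omega
    · have hiC : i ∈ Iᶜ := Finset.mem_compl.mpr hiI
      obtain ⟨L₁, L₂, hsplit⟩ := List.append_of_mem (Finset.mem_toList.mpr hiC)
      have hsumL : (L₁.map a).sum + a i + (L₂.map a).sum = B := by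
        have : (Iᶜ.toList.map a).sum = B := by rw [Finset.sum_map_toList, hC]
        rw [hsplit] at this
        simp at this
        omega
      have hWQ : W = (L₁.flatMap (seg1 a)) ++
          ((seg1 a i ++ L₂.flatMap (seg1 a)) ++ (P2 ++ P3)) := by
        rw [hW, hP1, hsplit, List.flatMap_append, List.flatMap_cons]
        simp [List.append_assoc]
      obtain ⟨hv, hle, ht⟩ := visit_at (L₁.flatMap (seg1 a))
        ((seg1 a i ++ L₂.flatMap (seg1 a)) ++ (P2 ++ P3)) 0 (by simp [seg1])
      rw [← hWQ] at hv hle ht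
      refine ⟨_, hle, ?_, ?_⟩
      · rw [hv]; simp [seg1]
      · rw [ht]
        have hQc : ((L₁.flatMap (seg1 a)).map Prod.snd).sum = 2 * (L₁.map a).sum := by
          rw [cost_flat _ _ hseg1cost, sum_map_mul 2 a]
        have htk : ((((seg1 a i ++ L₂.flatMap (seg1 a)) ++ (P2 ++ P3)).map
            Prod.snd).take 1).sum = a i := by simp [seg1]
        rw [hQc, htk]
        omega
  · -- outer visits
    intro i
    by_cases hiI : i ∈ I
    · obtain ⟨L₁, L₂, hsplit⟩ := List.append_of_mem (Finset.mem_toList.mpr hiI)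
      have hsumL : (L₁.map a).sum + a i + (L₂.map a).sum = B := by
        have : (I.toList.map a).sum = B := by rw [Finset.sum_map_toList, hI]
        rw [hsplit] at this
        simp at this
        omega
      have hWQ : W = (P1 ++ L₁.flatMap (seg2 a)) ++
          ((seg2 a i ++ L₂.flatMap (seg2 a)) ++ P3) := by
        rw [hW, hP2, hsplit, List.flatMap_append, List.flatMap_cons]
        simp [List.append_assoc]
      obtain ⟨hv, hle, ht⟩ := visit_at (P1 ++ L₁.flatMap (seg2 a))
        ((seg2 a i ++ L₂.flatMap (seg2 a)) ++ P3) 1 (by simp [seg2])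
      rw [← hWQ] at hv hle ht
      refine ⟨_, hle, ?_, ?_⟩
      · rw [hv]; simp [seg2]
      · rw [ht]
        have hQc : ((P1 ++ L₁.flatMap (seg2 a)).map Prod.snd).sum
            = 2 * B + 4 * (L₁.map a).sum := by
          rw [List.map_append, List.sum_append, hP1cost,
            cost_flat _ _ hseg2cost, sum_map_mul 4 a]
        have htk : ((((seg2 a i ++ L₂.flatMap (seg2 a)) ++ P3).map Prod.snd).take 2).sum
            = a i + a i := by simp [seg2]
        rw [hQc, htk]
        omega
    · have hiC : i ∈ Iᶜ := Finset.mem_compl.mpr hiI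
      obtain ⟨L₁, L₂, hsplit⟩ := List.append_of_mem (Finset.mem_toList.mpr hiC)
      have hsumL : (L₁.map a).sum + a i + (L₂.map a).sum = B := by
        have : (Iᶜ.toList.map a).sum = B := by rw [Finset.sum_map_toList, hC]
        rw [hsplit] at this
        simp at this
        omega
      have hWQ : W = (P1 ++ (P2 ++ L₁.flatMap (seg2 a))) ++
          (seg2 a i ++ L₂.flatMap (seg2 a)) := by
        rw [hW, hP3, hsplit, List.flatMap_append, List.flatMap_cons]
        simp [List.append_assoc]
      obtain ⟨hv, hle, ht⟩ := visit_at (P1 ++ (P2 ++ L₁.flatMap (seg2 a)))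
        (seg2 a i ++ L₂.flatMap (seg2 a)) 1 (by simp [seg2])
      rw [← hWQ] at hv hle ht
      refine ⟨_, hle, ?_, ?_⟩
      · rw [hv]; simp [seg2]
      · rw [ht]
        have hQc : ((P1 ++ (P2 ++ L₁.flatMap (seg2 a))).map Prod.snd).sum
            = 2 * B + (4 * B + 4 * (L₁.map a).sum) := by
          rw [List.map_append, List.sum_append, hP1cost, List.map_append,
            List.sum_append, hP2cost, cost_flat _ _ hseg2cost, sum_map_mul 4 a]
        have htk : (((seg2 a i ++ L₂.flatMap (seg2 a)).map Prod.snd).take 2).sum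
            = a i + a i := by simp [seg2]
        rw [hQc, htk]
        omega

end S2Laux

/-- Correctness of the reduction from PARTITION: with `H = B`, there is a walk from the
center of the S2L-STAR graph visiting every inner vertex `uᵢ` within time `6H − 3aᵢ` and
every outer vertex `wᵢ` within time `10H − 2aᵢ` iff some subset of the `aᵢ` sums to `B`. -/
theorem stmt5 (n B : ℕ) (hB : 0 < B) (a : Fin n → ℕ) (ha : ∀ i, 0 < a i)
    (hsum : ∑ i, a i = 2 * B) :
    (∃ (m : ℕ) (x : ℕ → S2LVertex n) (c : ℕ → ℕ),
        x 0 = S2LVertex.center ∧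
        (∀ j < m, S2LStep n a (x j) (x (j + 1)) (c j)) ∧
        (∀ i : Fin n, ∃ j ≤ m, x j = S2LVertex.inner i ∧
          (∑ l ∈ Finset.range j, c l) + 3 * a i ≤ 6 * B) ∧
        (∀ i : Fin n, ∃ j ≤ m, x j = S2LVertex.outer i ∧
          (∑ l ∈ Finset.range j, c l) + 2 * a i ≤ 10 * B)) ↔
      ∃ I : Finset (Fin n), ∑ i ∈ I, a i = B := by
  constructor
  · rintro ⟨m, x, c, hx0, hstep, hinner, houter⟩
    exact S2Laux.forward hB a ha hsum m x c hx0 hstep hinner houter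
  · rintro ⟨I, hI⟩
    exact S2Laux.backward hB a ha hsum I hI
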